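/- arXiv:2009.10486 — 3 statements merged into one kernel-verified Lean document; each statement's English description precedes it below -/
import Mathlib

section
/- Let Σ = (G, σ) be a signed graph with unique n-th power Σ^n = (G^n, σ′). For any u–v path P of length k in Σ^n, there exists a u–v path P′ in Σ of some length k′ with (k−1)n + 1 ≤ k′ ≤ kn such that σ′(P) = σ(P′). -/
open SimpleGraph Polynomial

variable {V : Type*}

/-- The sign of a walk: the product of the signs of its edges. -/
def walkSign {G : SimpleGraph V} (sg : V → V → ℤ) {u v : V} (p : G.Walk u v) : ℤ :=
  (p.darts.map fun d => sg d.toProd.1 d.toProd.2).prod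

/-- `sigmaMax G sg u v`: the maximum sign over all shortest `u`–`v` paths. -/
noncomputable def sigmaMax (G : SimpleGraph V) (sg : V → V → ℤ) (u v : V) : ℤ := by
  classical
  exact if ∃ p : G.Walk u v, p.length = G.dist u v ∧ walkSign sg p = 1 then 1 else -1

/-- `sigmaMin G sg u v`: the minimum sign over all shortest `u`–`v` paths. -/
noncomputable def sigmaMin (G : SimpleGraph V) (sg : V → V → ℤ) (u v : V) : ℤ := by
  classical
  exact if ∃ p : G.Walk u v, p.length = G.dist u v ∧ walkSign sg p = -1 then -1 else 1

/-- `u` and `v` are distance-compatible: all shortest `u`–`v` paths have the same sign. -/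
def pairCompatible (G : SimpleGraph V) (sg : V → V → ℤ) (u v : V) : Prop :=
  ∀ p q : G.Walk u v, p.length = G.dist u v → q.length = G.dist u v →
    walkSign sg p = walkSign sg q

/-- The `n`-th power graph: `u ~ v` iff `u ≠ v` and `d(u,v) ≤ n`. -/
def powerGraph (G : SimpleGraph V) (n : ℕ) : SimpleGraph V where
  Adj u v := u ≠ v ∧ G.dist u v ≤ n
  symm := by
    constructor
    intro u v h
    exact ⟨h.1.symm, by rw [SimpleGraph.dist_comm]; exact h.2⟩
  loopless := by
    constructor
    intro u h
    exact h.1 rfl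

/-- A signed graph is balanced if every cycle has positive sign. -/
def SBalanced (G : SimpleGraph V) (sg : V → V → ℤ) : Prop :=
  ∀ ⦃u : V⦄ (p : G.Walk u u), p.IsCycle → walkSign sg p = 1

/-- 2-connectedness: at least 3 vertices and deleting any vertex leaves a connected graph. -/
def TwoConnected [Fintype V] (G : SimpleGraph V) : Prop :=
  3 ≤ Fintype.card V ∧ ∀ v : V, ((⊤ : G.Subgraph).deleteVerts {v}).coe.Connected

/-- Signature of the associated signed complete graph `K^{D^max}(Σ)`:
edges of `G` keep their sign, non-adjacent pairs get `sigmaMax`. -/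
noncomputable def kSigMax (G : SimpleGraph V) (sg : V → V → ℤ) (u v : V) : ℤ := by
  classical
  exact if G.Adj u v then sg u v else sigmaMax G sg u v

/-- Signature of the associated signed complete graph `K^{D^min}(Σ)`. -/
noncomputable def kSigMin (G : SimpleGraph V) (sg : V → V → ℤ) (u v : V) : ℤ := by
  classical
  exact if G.Adj u v then sg u v else sigmaMin G sg u v

lemma walkSign_nil {G : SimpleGraph V} (sg : V → V → ℤ) (u : V) :
    walkSign sg (SimpleGraph.Walk.nil : G.Walk u u) = 1 := rfl

lemma walkSign_cons {G : SimpleGraph V} (sg : V → V → ℤ) {u w v : V} (h : G.Adj u w)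
    (p : G.Walk w v) : walkSign sg (SimpleGraph.Walk.cons h p) = sg u w * walkSign sg p := by
  simp [walkSign]

lemma walkSign_append {G : SimpleGraph V} (sg : V → V → ℤ) {u w v : V}
    (p : G.Walk u w) (q : G.Walk w v) :
    walkSign sg (p.append q) = walkSign sg p * walkSign sg q := by
  simp [walkSign, SimpleGraph.Walk.darts_append]

lemma walkSign_pm {G : SimpleGraph V} (sg : V → V → ℤ)
    (hval : ∀ u v, G.Adj u v → sg u v = 1 ∨ sg u v = -1) {u v : V} (p : G.Walk u v) :
    walkSign sg p = 1 ∨ walkSign sg p = -1 := by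
  induction p with
  | nil => left; rfl
  | cons h q ih =>
    rw [walkSign_cons]
    rcases hval _ _ h with h1 | h1 <;> rcases ih with h2 | h2 <;> simp [h1, h2]

lemma sigmaMax_eq_of_shortest {G : SimpleGraph V} (sg : V → V → ℤ)
    (hval : ∀ u v, G.Adj u v → sg u v = 1 ∨ sg u v = -1) {u v : V}
    (hcomp : pairCompatible G sg u v) (p : G.Walk u v) (hp : p.length = G.dist u v) :
    sigmaMax G sg u v = walkSign sg p := by
  rcases walkSign_pm sg hval p with h1 | h1
  · rw [h1, sigmaMax, if_pos ⟨p, hp, h1⟩]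
  · rw [h1, sigmaMax, if_neg]
    rintro ⟨q, hq, hq1⟩
    have := hcomp p q hp hq
    rw [h1, hq1] at this
    exact absurd this (by norm_num)

lemma power_walk_aux {V : Type*} (G : SimpleGraph V) (sg : V → V → ℤ)
    (hconn : G.Connected)
    (hval : ∀ u v, G.Adj u v → sg u v = 1 ∨ sg u v = -1)
    (n : ℕ)
    (huniq : ∀ u v : V, u ≠ v → G.dist u v ≤ n → pairCompatible G sg u v)
    {u v : V} (P : (powerGraph G n).Walk u v) :
    ∃ P' : G.Walk u v, P.length ≤ P'.length ∧ P'.length ≤ P.length * n ∧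
      walkSign sg P' = walkSign (sigmaMax G sg) P := by
  induction P with
  | nil => exact ⟨SimpleGraph.Walk.nil, le_refl _, by simp, rfl⟩
  | @cons a b c h q ih =>
    obtain ⟨Q, hQ1, hQ2, hQ3⟩ := ih
    obtain ⟨p0, hp0⟩ := hconn.exists_walk_length_eq_dist a b
    have hdpos : 1 ≤ G.dist a b := by
      rcases Nat.eq_zero_or_pos (G.dist a b) with h0 | h0
      · exact absurd ((hconn a b).dist_eq_zero_iff.mp h0) h.1
      · exact h0
    refine ⟨p0.append Q, ?_, ?_, ?_⟩
    · have := hp0 ▸ hdpos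
      simp only [SimpleGraph.Walk.length_append, SimpleGraph.Walk.length_cons]
      omega
    · have : p0.length ≤ n := hp0 ▸ h.2
      simp only [SimpleGraph.Walk.length_append, SimpleGraph.Walk.length_cons]
      nlinarith [hQ2]
    · rw [walkSign_append, walkSign_cons, hQ3,
        sigmaMax_eq_of_shortest sg hval (huniq a b h.1 h.2) p0 hp0]

lemma pad_walk {G : SimpleGraph V} (sg : V → V → ℤ)
    (hsym : ∀ u v, sg u v = sg v u)
    (hval : ∀ u v, G.Adj u v → sg u v = 1 ∨ sg u v = -1)
    {u v : V} (hne : u ≠ v) (p : G.Walk u v) (j : ℕ) :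
    ∃ q : G.Walk u v, q.length = p.length + 2 * j ∧ walkSign sg q = walkSign sg p := by
  induction j with
  | zero => exact ⟨p, by omega, rfl⟩
  | succ j ih =>
    obtain ⟨q, hq1, hq2⟩ := ih
    cases q with
    | nil => exact absurd rfl hne
    | @cons _ w _ h t =>
      refine ⟨.cons h (.cons h.symm (.cons h t)), ?_, ?_⟩
      · simp only [SimpleGraph.Walk.length_cons] at hq1 ⊢
        omega
      · rw [walkSign_cons, walkSign_cons, hq2, ← hsym]
        rcases hval _ _ h.symm with h1 | h1 <;> rw [h1] <;> ring

lemma pad_arith (k n L : ℕ) (hn : 1 ≤ n) (hk : 1 ≤ k) (h1 : k ≤ L) (h2 : L ≤ k * n) :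
    ∃ j : ℕ, (k - 1) * n + 1 ≤ L + 2 * j ∧ L + 2 * j ≤ k * n := by
  rcases le_or_gt ((k - 1) * n + 1) L with h | h
  · exact ⟨0, by omega, by omega⟩
  · have e : (k - 1) * n + n = k * n := by
      cases k with
      | zero => omega
      | succ m => simp [Nat.succ_sub_one, Nat.succ_mul]
    rcases eq_or_lt_of_le hn with h1' | hn2
    · rw [← h1'] at h h2 ⊢
      simp only [mul_one] at h h2 ⊢
      omega
    · exact ⟨((k - 1) * n + 2 - L) / 2, by omega, by omega⟩

theorem path_in_power_comes_from_path {V : Type*} [Fintype V] (G : SimpleGraph V) (sg : V → V → ℤ)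
    (hconn : G.Connected) (hsym : ∀ u v, sg u v = sg v u)
    (hval : ∀ u v, G.Adj u v → sg u v = 1 ∨ sg u v = -1)
    (n : ℕ) (hn : 1 ≤ n)
    (huniq : ∀ u v : V, u ≠ v → G.dist u v ≤ n → pairCompatible G sg u v)
    (u v : V) (hne : u ≠ v) (P : (powerGraph G n).Walk u v) (hP : P.IsPath) :
    ∃ P' : G.Walk u v,
      (P.length - 1) * n + 1 ≤ P'.length ∧ P'.length ≤ P.length * n ∧
      walkSign sg P' = walkSign (sigmaMax G sg) P := by
  obtain ⟨P', h1, h2, h3⟩ := power_walk_aux G sg hconn hval n huniq P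
  have hk : 1 ≤ P.length := by
    rcases Nat.eq_zero_or_pos P.length with h0 | h0
    · exact absurd (SimpleGraph.Walk.eq_of_length_eq_zero h0) hne
    · exact h0
  obtain ⟨j, hj1, hj2⟩ := pad_arith P.length n P'.length hn hk h1 h2
  obtain ⟨Q, hQ1, hQ2⟩ := pad_walk sg hsym hval hne P' j
  exact ⟨Q, by omega, by omega, hQ2.trans h3⟩
end

section
/- If Σ = (G, σ) is a 2-connected balanced signed graph, then its n-th power signed graph Σ^n = (G^n, σ′) is distance-compatible. -/
open SimpleGraph Polynomial

variable {V : Type*}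

section MyAux
variable {G : SimpleGraph V} (sg : V → V → ℤ)

lemma myWalkSign_nil {u : V} : walkSign sg (Walk.nil : G.Walk u u) = 1 := rfl

lemma myWalkSign_cons {u v w : V} (h : G.Adj u v) (p : G.Walk v w) :
    walkSign sg (Walk.cons h p) = sg u v * walkSign sg p := by
  simp [walkSign, Walk.darts_cons]

lemma myWalkSign_append {u v w : V} (p : G.Walk u v) (q : G.Walk v w) :
    walkSign sg (p.append q) = walkSign sg p * walkSign sg q := by
  simp [walkSign, Walk.darts_append]

lemma myWalkSign_reverse (hsym : ∀ a b, sg a b = sg b a) {u v : V} (p : G.Walk u v) :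
    walkSign sg p.reverse = walkSign sg p := by
  unfold walkSign
  rw [Walk.darts_reverse, List.map_reverse, List.prod_reverse, List.map_map]
  congr 1
  apply List.map_congr_left
  intro d _
  simp [Dart.symm, hsym d.toProd.1 d.toProd.2]

lemma myWalkSign_mul_self (hval : ∀ u v, G.Adj u v → sg u v = 1 ∨ sg u v = -1)
    {u v : V} (p : G.Walk u v) : walkSign sg p * walkSign sg p = 1 := by
  induction p with
  | nil => norm_num [myWalkSign_nil]
  | cons h q ih =>
    rw [myWalkSign_cons, mul_mul_mul_comm, ih, mul_one]
    rcases hval _ _ h with h1 | h1 <;> rw [h1] <;> norm_num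

lemma myLengthOneSign {u v : V} (p : G.Walk u v) (hp : p.length = 1) :
    walkSign sg p = sg u v := by
  cases p with
  | nil => simp at hp
  | cons h r =>
    have hr : r.length = 0 := by simpa using hp
    have hx := Walk.eq_of_length_eq_zero hr
    subst hx
    have hd : r.darts = [] := List.length_eq_zero_iff.mp (by rw [Walk.length_darts, hr])
    simp [walkSign, Walk.darts_cons, hd]

lemma myPathEdge {a b : V} (q : G.Walk a b) (hq : q.IsPath) (he : s(a, b) ∈ q.edges) :
    q.length = 1 := by
  cases q with
  | nil => simp at he
  | cons h r =>
    rw [Walk.edges_cons, List.mem_cons] at he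
    rw [Walk.cons_isPath_iff] at hq
    rcases he with he | he
    · have hbx := Sym2.congr_right.mp he
      subst hbx
      rw [(Walk.isPath_iff_eq_nil (p := r)).mp hq.1]
      rfl
    · exact absurd (Walk.fst_mem_support_of_mem_edges r he) hq.2
end MyAux


lemma myClosedSign {G : SimpleGraph V} (sg : V → V → ℤ)
    (hsym : ∀ a b, sg a b = sg b a)
    (hval : ∀ a b, G.Adj a b → sg a b = 1 ∨ sg a b = -1)
    (hbal : SBalanced G sg) :
    ∀ {u : V} (c : G.Walk u u), walkSign sg c = 1 := by
  classical
  suffices h : ∀ (n : ℕ) (u : V) (c : G.Walk u u), c.length ≤ n → walkSign sg c = 1 by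
    intro u c; exact h c.length u c le_rfl
  intro n
  induction n with
  | zero =>
    intro u c hc
    cases c with
    | nil => rfl
    | cons h p => simp [Walk.length_cons] at hc
  | succ n ih =>
    -- splitting helper: if the first vertex reappears strictly before the end of p
    have split : ∀ (u v : V) (h : G.Adj u v) (p : G.Walk v u),
        p.length ≤ n → (p.dropUntil u p.end_mem_support).length ≠ 0 →
        walkSign sg (Walk.cons h p) = 1 := by
      intro u v h p hp hd
      have hspec := p.take_spec p.end_mem_support
      have hlen : (p.takeUntil u p.end_mem_support).length
          + (p.dropUntil u p.end_mem_support).length = p.length := by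
        conv_rhs => rw [← hspec]
        exact (Walk.length_append _ _).symm
      have e1 := ih u (Walk.cons h (p.takeUntil u p.end_mem_support))
        (by rw [Walk.length_cons]; omega)
      have e2 := ih u (p.dropUntil u p.end_mem_support) (by omega)
      calc walkSign sg (Walk.cons h p) = sg u v * walkSign sg p := myWalkSign_cons sg h p
        _ = sg u v * (walkSign sg (p.takeUntil u p.end_mem_support)
              * walkSign sg (p.dropUntil u p.end_mem_support)) := by
            conv_lhs => rw [← hspec]
            rw [myWalkSign_append]
        _ = walkSign sg (Walk.cons h (p.takeUntil u p.end_mem_support))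
              * walkSign sg (p.dropUntil u p.end_mem_support) := by
            rw [myWalkSign_cons]; ring
        _ = 1 := by rw [e1, e2, one_mul]
    -- key: any closed walk whose base point appears twice in the tail of its support splits
    have key : ∀ (w : V) (c2 : G.Walk w w), c2.length ≤ n + 1 →
        2 ≤ c2.support.tail.count w → walkSign sg c2 = 1 := by
      intro w c2 hl2 hcnt
      cases c2 with
      | nil => simp at hcnt
      | cons h₂ p₂ =>
        rename_i x
        have hx : 2 ≤ p₂.support.count w := by
          simpa [Walk.support_cons] using hcnt
        have hwp : w ∈ p₂.support := p₂.end_mem_support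
        have hsp : p₂.support = (p₂.takeUntil w hwp).support
            ++ (p₂.dropUntil w hwp).support.tail := by
          conv_lhs => rw [← p₂.take_spec hwp]
          exact Walk.support_append _ _
        have hone := Walk.count_support_takeUntil_eq_one p₂ hwp
        have hdl : (p₂.dropUntil w hwp).length ≠ 0 := by
          intro h0
          have hsupl : (p₂.dropUntil w hwp).support.length = 1 := by
            rw [Walk.length_support, h0]
          have htail : (p₂.dropUntil w hwp).support.tail = [] := by
            cases hsup : (p₂.dropUntil w hwp).support with
            | nil => rfl
            | cons a l => simp [hsup] at hsupl; simpa using hsupl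
          rw [hsp, List.count_append, hone, htail] at hx
          simp at hx
        exact split w x h₂ p₂ (by rw [Walk.length_cons] at hl2; omega) hdl
    intro u c hc
    cases c with
    | nil => rfl
    | cons h p =>
      rename_i v
      have hp : p.length ≤ n := by rw [Walk.length_cons] at hc; omega
      by_cases hpath : p.IsPath
      · by_cases he : s(u, v) ∈ p.edges
        · have hl : p.length = 1 := myPathEdge p hpath (by rwa [Sym2.eq_swap])
          rw [myWalkSign_cons, myLengthOneSign sg p hl, ← hsym u v]
          rcases hval u v h with h1 | h1 <;> rw [h1] <;> norm_num
        · exact hbal _ ((Walk.cons_isCycle_iff p h).mpr ⟨hpath, he⟩)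
      · obtain ⟨w, hw⟩ := List.exists_duplicate_iff_not_nodup.mpr
          (by rwa [Walk.isPath_def] at hpath)
        have hw2 : 2 ≤ p.support.count w := List.duplicate_iff_two_le_count.mp hw
        have hwc : w ∈ (Walk.cons h p).support := by
          rw [Walk.support_cons]; exact List.mem_cons_of_mem _ hw.mem
        have hsign : walkSign sg ((Walk.cons h p).rotate w hwc)
            = walkSign sg (Walk.cons h p) := by
          unfold walkSign
          exact List.Perm.prod_eq (((Walk.rotate_darts _ w hwc).perm).map _)
        have hlenr : ((Walk.cons h p).rotate w hwc).length = (Walk.cons h p).length := by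
          rw [← Walk.length_darts, ← Walk.length_darts]
          exact ((Walk.rotate_darts _ w hwc).perm).length_eq
        have hcount : 2 ≤ ((Walk.cons h p).rotate w hwc).support.tail.count w := by
          rw [((Walk.support_rotate _ w hwc).perm).count_eq]
          simpa [Walk.support_cons] using hw2
        rw [← hsign]
        exact key w _ (by rw [hlenr, Walk.length_cons]; omega) hcount

section Main
variable {G : SimpleGraph V}

lemma myWalkSign_eq (sg : V → V → ℤ) (hsym : ∀ a b, sg a b = sg b a)
    (hval : ∀ a b, G.Adj a b → sg a b = 1 ∨ sg a b = -1)
    (hbal : SBalanced G sg) {u v : V} (p q : G.Walk u v) :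
    walkSign sg p = walkSign sg q := by
  have h1 := myClosedSign sg hsym hval hbal (p.append q.reverse)
  rw [myWalkSign_append, myWalkSign_reverse sg hsym] at h1
  have h2 := myWalkSign_mul_self sg hval q
  calc walkSign sg p = walkSign sg p * (walkSign sg q * walkSign sg q) := by
        rw [h2, mul_one]
    _ = (walkSign sg p * walkSign sg q) * walkSign sg q := by ring
    _ = walkSign sg q := by rw [h1, one_mul]

end Main

theorem balanced_implies_power_compatible {V : Type*} [Fintype V] (G : SimpleGraph V) (sg : V → V → ℤ)
    (hconn : G.Connected) (hsym : ∀ u v, sg u v = sg v u)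
    (hval : ∀ u v, G.Adj u v → sg u v = 1 ∨ sg u v = -1)
    (h2 : TwoConnected G) (hbal : SBalanced G sg) (n : ℕ) (hn : 1 ≤ n) :
    ∀ u v : V, pairCompatible (powerGraph G n) (sigmaMax G sg) u v := by
  classical
  have hreach : ∀ a b : V, Nonempty (G.Walk a b) := fun a b => hconn.preconnected a b
  set S : V → V → ℤ := fun a b => walkSign sg (hreach a b).some with hS
  have hSwalk : ∀ {a b : V} (p : G.Walk a b), walkSign sg p = S a b :=
    fun p => myWalkSign_eq sg hsym hval hbal p _
  have hSuu : ∀ a : V, S a a = 1 := fun a => (hSwalk (Walk.nil : G.Walk a a)).symm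
  have hmul : ∀ a b c : V, S a b * S b c = S a c := by
    intro a b c
    rw [← hSwalk ((hreach a b).some.append (hreach b c).some), myWalkSign_append,
      hSwalk (hreach a b).some, hSwalk (hreach b c).some]
  have hsm : ∀ a b : V, sigmaMax G sg a b = S a b := by
    intro a b
    obtain ⟨p, hp⟩ := hconn.exists_walk_length_eq_dist a b
    have hps := hSwalk p
    have hpm : S a b = 1 ∨ S a b = -1 := by
      have hms := myWalkSign_mul_self sg hval p
      rw [hps] at hms
      exact mul_self_eq_one_iff.mp hms
    unfold sigmaMax
    rcases hpm with h1 | h1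
    · rw [if_pos ⟨p, hp, by rw [hps, h1]⟩, h1]
    · rw [if_neg, h1]
      rintro ⟨q, _, hqs⟩
      rw [hSwalk q, h1] at hqs
      norm_num at hqs
  have hpow : ∀ {a b : V} (p : (powerGraph G n).Walk a b),
      walkSign (sigmaMax G sg) p = S a b := by
    intro a b p
    induction p with
    | nil => exact (hSuu _).symm
    | cons h q ih => rw [myWalkSign_cons, ih, hsm, hmul]
  intro u v p q _ _
  rw [hpow p, hpow q]
end

section
/- A signed graph Σ on m vertices is balanced if and only if D^max(Σ) = D^min(Σ) and the adjacency matrix of the associated signed complete graph K^{D^±}(Σ) has spectrum consisting of the eigenvalue m−1 with multiplicity 1 and the eigenvalue −1 with multiplicity m−1. -/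
open SimpleGraph Polynomial

variable {V : Type*}

namespace SignedAux

variable {G : SimpleGraph V} {sg : V → V → ℤ}

lemma walkSign_nil {u : V} : walkSign sg (SimpleGraph.Walk.nil : G.Walk u u) = 1 := rfl

lemma walkSign_cons {u v w : V} (h : G.Adj u v) (p : G.Walk v w) :
    walkSign sg (SimpleGraph.Walk.cons h p) = sg u v * walkSign sg p := by
  simp [walkSign]

lemma walkSign_append {u v w : V} (p : G.Walk u v) (q : G.Walk v w) :
    walkSign sg (p.append q) = walkSign sg p * walkSign sg q := by
  simp [walkSign, SimpleGraph.Walk.darts_append]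

lemma walkSign_reverse (hsym : ∀ u v, sg u v = sg v u) {u v : V} (p : G.Walk u v) :
    walkSign sg p.reverse = walkSign sg p := by
  unfold walkSign
  rw [SimpleGraph.Walk.darts_reverse, List.map_reverse, List.prod_reverse, List.map_map]
  congr 1
  apply List.map_congr_left
  intro d _
  exact (hsym _ _).symm

lemma walkSign_pm (hval : ∀ u v, G.Adj u v → sg u v = 1 ∨ sg u v = -1) {u v : V}
    (p : G.Walk u v) : walkSign sg p = 1 ∨ walkSign sg p = -1 := by
  induction p with
  | nil => left; rfl
  | cons h q ih =>
    rw [walkSign_cons]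
    rcases hval _ _ h with h1 | h1 <;> rcases ih with h2 | h2 <;> rw [h1, h2] <;> simp

lemma walkSign_rotate [DecidableEq V] {u w : V} (c : G.Walk u u) (h : w ∈ c.support) :
    walkSign sg (c.rotate w h) = walkSign sg c := by
  unfold walkSign
  exact List.Perm.prod_eq (((SimpleGraph.Walk.rotate_darts c w h).perm).map _)

lemma walkSign_theta (θ : V → ℤ) (hθ : ∀ x, θ x * θ x = 1)
    (hsg : ∀ x y, G.Adj x y → sg x y = θ x * θ y) {u v : V} (p : G.Walk u v) :
    walkSign sg p = θ u * θ v := by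
  induction p with
  | nil => exact (hθ _).symm
  | @cons a b c h q ih =>
    rw [walkSign_cons, ih, hsg _ _ h]
    linear_combination θ a * θ c * hθ b

end SignedAux

namespace SignedAux
variable {G : SimpleGraph V} {sg : V → V → ℤ}

lemma closedWalk_sign [DecidableEq V] (hb : SBalanced G sg)
    (hsym : ∀ u v, sg u v = sg v u)
    (hval : ∀ u v, G.Adj u v → sg u v = 1 ∨ sg u v = -1) :
    ∀ (n : ℕ) {u : V} (p : G.Walk u u), p.length = n → walkSign sg p = 1 := by
  intro n
  induction n using Nat.strong_induction_on with
  | _ n IH =>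
  intro u p hn
  cases p with
  | nil => rfl
  | @cons _ v _ h q =>
    by_cases hnd : (SimpleGraph.Walk.cons h q).support.tail.Nodup
    · have hq : q.IsPath := by
        rw [SimpleGraph.Walk.isPath_def]
        simpa using hnd
      by_cases he : s(u, v) ∈ q.edges
      · cases q with
        | nil => exact absurd rfl h.ne
        | @cons _ w _ h2 r =>
          rw [SimpleGraph.Walk.edges_cons, List.mem_cons] at he
          rcases he with he | he
          · -- s(u,v) = s(v,w) hence w = u and r is nil
            have hw : u = w := by
              rw [Sym2.eq_iff] at he
              rcases he with ⟨h1, h2'⟩ | ⟨h1, h2'⟩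
              · exact absurd h1 h.ne
              · exact h1
            subst hw
            have hr : r = SimpleGraph.Walk.nil := by
              have := hq.of_cons
              rwa [SimpleGraph.Walk.isPath_iff_eq_nil] at this
            subst hr
            rw [walkSign_cons, walkSign_cons, walkSign_nil, mul_one, hsym v u]
            rcases hval _ _ h with h1 | h1 <;> rw [h1] <;> norm_num
          · -- s(u,v) ∈ r.edges : contradiction with path
            exfalso
            have hv : v ∈ r.support := r.snd_mem_support_of_mem_edges he
            have := hq.support_nodup
            rw [SimpleGraph.Walk.support_cons, List.nodup_cons] at this
            exact this.1 hv
      · exact hb _ ((SimpleGraph.Walk.cons_isCycle_iff q h).2 ⟨hq, he⟩)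
    · -- there is a repeated vertex in the tail of the support
      obtain ⟨w, hdup⟩ := List.exists_duplicate_iff_not_nodup.2 hnd
      have hcount : 2 ≤ ((SimpleGraph.Walk.cons h q).support.tail.count w) :=
        List.duplicate_iff_two_le_count.1 hdup
      have hw : w ∈ (SimpleGraph.Walk.cons h q).support := by
        have : w ∈ (SimpleGraph.Walk.cons h q).support.tail := hdup.mem
        rw [SimpleGraph.Walk.support_cons] at this ⊢
        exact List.mem_cons_of_mem _ this
      have hlen : ((SimpleGraph.Walk.cons h q).rotate w hw).length = n := by
        have h1 := ((SimpleGraph.Walk.rotate_darts (SimpleGraph.Walk.cons h q) w hw).perm).length_eq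
        rwa [SimpleGraph.Walk.length_darts, SimpleGraph.Walk.length_darts, hn] at h1
      have hsign : walkSign sg ((SimpleGraph.Walk.cons h q).rotate w hw)
          = walkSign sg (SimpleGraph.Walk.cons h q) := walkSign_rotate _ hw
      have hcount' : 2 ≤ ((SimpleGraph.Walk.cons h q).rotate w hw).support.tail.count w := by
        have hperm := (SimpleGraph.Walk.support_rotate (SimpleGraph.Walk.cons h q) w hw).perm
        rw [hperm.count_eq]
        exact hcount
      have aux : ∀ (c : G.Walk w w), c.length = n →
          2 ≤ c.support.tail.count w → walkSign sg c = 1 := by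
        intro c hlen hcount'
        cases c with
        | nil =>
          exfalso
          rw [SimpleGraph.Walk.length_nil] at hlen
          rw [SimpleGraph.Walk.length_cons] at hn
          omega
        | @cons _ x _ h2 r =>
          rw [SimpleGraph.Walk.support_cons, List.tail_cons] at hcount'
          have hwr : w ∈ r.support := List.count_pos_iff.1 (by omega)
          have hspec := r.take_spec hwr
          have hr2 : ¬ (r.dropUntil w hwr) = SimpleGraph.Walk.nil := by
            intro hnil
            have h1 : (r.takeUntil w hwr).support.count w = 1 :=
              r.count_support_takeUntil_eq_one hwr
            have h2' := congrArg (fun (t : G.Walk x w) => t.support.count w) hspec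
            rw [SimpleGraph.Walk.support_append, List.count_append, h1, hnil] at h2'
            simp at h2'
            omega
          have hlen2 : 1 ≤ (r.dropUntil w hwr).length := by
            rcases hd : (r.dropUntil w hwr) with _ | _
            · exact absurd hd hr2
            · simp [SimpleGraph.Walk.length_cons]
          have hlensum : (r.takeUntil w hwr).length + (r.dropUntil w hwr).length = r.length := by
            have := congrArg SimpleGraph.Walk.length hspec
            rwa [SimpleGraph.Walk.length_append] at this
          have hlenr : r.length + 1 = n := by
            rw [SimpleGraph.Walk.length_cons] at hlen; omega
          have key : walkSign sg (SimpleGraph.Walk.cons h2 r) =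
              walkSign sg (SimpleGraph.Walk.cons h2 (r.takeUntil w hwr)) *
                walkSign sg (r.dropUntil w hwr) := by
            conv_lhs => rw [← hspec]
            rw [walkSign_cons, walkSign_cons, walkSign_append, mul_assoc]
          rw [key, IH ((r.takeUntil w hwr).length + 1) (by omega) _
              (SimpleGraph.Walk.length_cons _ _),
            IH (r.dropUntil w hwr).length (by omega) _ rfl, mul_one]
      rw [← hsign]
      exact aux _ hlen hcount'

end SignedAux

namespace SignedAux
variable {G : SimpleGraph V} {sg : V → V → ℤ}

lemma exists_theta [DecidableEq V] (hb : SBalanced G sg) (hconn : G.Connected)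
    (hsym : ∀ u v, sg u v = sg v u)
    (hval : ∀ u v, G.Adj u v → sg u v = 1 ∨ sg u v = -1) :
    ∃ θ : V → ℤ, (∀ x, θ x * θ x = 1) ∧
      ∀ {u v : V} (p : G.Walk u v), walkSign sg p = θ u * θ v := by
  classical
  obtain ⟨v₀⟩ := hconn.nonempty
  have P : ∀ v : V, G.Walk v₀ v := fun v => (hconn.preconnected v₀ v).some
  refine ⟨fun v => walkSign sg (P v), ?_, ?_⟩
  · intro x
    show walkSign sg (P x) * walkSign sg (P x) = 1
    rcases walkSign_pm hval (P x) with h1 | h1 <;> rw [h1] <;> norm_num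
  · intro u v p
    show walkSign sg p = walkSign sg (P u) * walkSign sg (P v)
    have hclosed : walkSign sg ((P u).append (p.append (P v).reverse)) = 1 :=
      closedWalk_sign hb hsym hval _ _ rfl
    rw [walkSign_append, walkSign_append, walkSign_reverse hsym] at hclosed
    rcases walkSign_pm hval (P u) with h1 | h1 <;>
      rcases walkSign_pm hval (P v) with h2 | h2 <;>
      rw [h1, h2] at hclosed ⊢ <;> linarith
end SignedAux

namespace SignedAux2
open Matrix
variable {n : Type*} [Fintype n] [DecidableEq n]

lemma eval_charpoly' (M : Matrix n n ℝ) (r : ℝ) :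
    (M.charpoly).eval r = (Matrix.scalar n r - M).det := by
  rw [Matrix.charpoly, eval_det, Matrix.matPolyEquiv_charmatrix]
  simp

lemma det_aux [Nonempty n] (w : n → ℝ) (hw : ∀ i, w i * w i = 1) (x : ℝ) (hx : x ≠ -1) :
    (Matrix.scalar n x - (Matrix.vecMulVec w w - 1)).det
      = (x - ((Fintype.card n : ℝ) - 1)) * (x + 1) ^ (Fintype.card n - 1) := by
  have ha0 : x + 1 ≠ 0 := by intro h; apply hx; linarith
  have hM : Matrix.scalar n x - (Matrix.vecMulVec w w - 1)
      = (x + 1) • ((1 : Matrix n n ℝ) +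
          Matrix.replicateCol Unit (-(x + 1)⁻¹ • w) * Matrix.replicateRow Unit w) := by
    rw [← Matrix.vecMulVec_eq Unit]
    ext i j
    by_cases hij : i = j
    · subst hij
      simp only [Matrix.sub_apply, Matrix.scalar_apply, Matrix.diagonal_apply_eq,
        Matrix.vecMulVec_apply, Matrix.one_apply_eq, Matrix.smul_apply, Matrix.add_apply,
        Pi.smul_apply, smul_eq_mul]
      rw [mul_add, mul_one]
      field_simp
      rw [sq, hw i]
      ring
    · simp only [Matrix.sub_apply, Matrix.scalar_apply, Matrix.diagonal_apply_ne _ hij,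
        Matrix.vecMulVec_apply, Matrix.one_apply_ne hij, Matrix.smul_apply, Matrix.add_apply,
        Pi.smul_apply, smul_eq_mul]
      field_simp
      ring
  rw [hM, Matrix.det_smul, Matrix.det_one_add_replicateCol_mul_replicateRow]
  have hdot : w ⬝ᵥ (-(x + 1)⁻¹ • w) = -(x + 1)⁻¹ * (Fintype.card n : ℝ) := by
    unfold dotProduct
    have h1 : ∀ i, w i * (-(x + 1)⁻¹ • w) i = -(x + 1)⁻¹ := by
      intro i
      simp only [Pi.smul_apply, smul_eq_mul]
      calc w i * (-(x + 1)⁻¹ * w i) = -(x + 1)⁻¹ * (w i * w i) := by ring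
        _ = -(x + 1)⁻¹ := by rw [hw i, mul_one]
    rw [Finset.sum_congr rfl fun i _ => h1 i, Finset.sum_const, Finset.card_univ,
      nsmul_eq_mul, mul_comm]
  rw [hdot]
  have hcard : 1 ≤ Fintype.card n := Fintype.card_pos
  have hpow : (x + 1) ^ Fintype.card n = (x + 1) ^ (Fintype.card n - 1) * (x + 1) := by
    rw [← pow_succ]
    congr 1
    omega
  rw [hpow]
  field_simp
  ring

lemma charpoly_aux [Nonempty n] (w : n → ℝ) (hw : ∀ i, w i * w i = 1) :
    (Matrix.vecMulVec w w - 1).charpoly =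
      (Polynomial.X - Polynomial.C ((Fintype.card n : ℝ) - 1)) *
        (Polynomial.X + Polynomial.C 1) ^ (Fintype.card n - 1) := by
  apply Polynomial.eq_of_infinite_eval_eq
  apply Set.Infinite.mono (s := ({-1}ᶜ : Set ℝ)) ?_
    ((Set.finite_singleton (-1 : ℝ)).infinite_compl)
  intro x hx
  have hx' : x ≠ -1 := by simpa using hx
  show Polynomial.eval x _ = Polynomial.eval x _
  rw [eval_charpoly', det_aux w hw x hx']
  simp

lemma sym_sq (B : Matrix n n ℝ) (hB : Bᵀ = B) (h : B * B = 0) : B = 0 := by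
  ext i j
  have hii : (B * B) i i = 0 := by rw [h]; rfl
  rw [Matrix.mul_apply] at hii
  have h2 : ∀ k ∈ Finset.univ, B i k * B k i = B i k ^ 2 := by
    intro k _
    rw [sq]
    congr 1
    conv_lhs => rw [← hB]
    exact Matrix.transpose_apply _ _ _
  rw [Finset.sum_congr rfl h2] at hii
  have h3 := (Finset.sum_eq_zero_iff_of_nonneg (fun k _ => sq_nonneg (B i k))).1 hii j
    (Finset.mem_univ j)
  exact pow_eq_zero_iff (two_ne_zero) |>.1 h3

lemma sym_pow_two (B : Matrix n n ℝ) (hB : Bᵀ = B) :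
    ∀ j : ℕ, B ^ (2 ^ j) = 0 → B = 0 := by
  intro j
  induction j with
  | zero => intro h; rwa [pow_zero, pow_one] at h
  | succ k ih =>
    intro h
    apply ih
    apply sym_sq _ (by rw [Matrix.transpose_pow, hB])
    rw [← sq, ← pow_mul]
    rw [pow_succ] at h
    exact h

lemma sym_pow (B : Matrix n n ℝ) (hB : Bᵀ = B) (k : ℕ) (hk : k ≠ 0) (h : B ^ k = 0) :
    B = 0 := by
  apply sym_pow_two B hB k
  have h2 : B ^ (2 ^ k) = B ^ k * B ^ (2 ^ k - k) := by
    rw [← pow_add]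
    congr 1
    have := Nat.lt_two_pow_self (n := k)
    omega
  rw [h2, h, zero_mul]

lemma sum_pm_eq {α : Type*} (s : Finset α) (f : α → ℝ)
    (hf : ∀ w ∈ s, f w = 1 ∨ f w = -1) (t : ℝ) (ht : t = 1 ∨ t = -1)
    (h : ∑ w ∈ s, f w = s.card * t) : ∀ w ∈ s, f w = t := by
  rcases ht with rfl | rfl
  · intro w hw
    by_contra hne
    have hfw : f w = -1 := (hf w hw).resolve_left hne
    have hlt : ∑ x ∈ s, f x < ∑ _x ∈ s, (1 : ℝ) :=
      Finset.sum_lt_sum (fun i hi => by rcases hf i hi with h1 | h1 <;> rw [h1] <;> norm_num)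
        ⟨w, hw, by rw [hfw]; norm_num⟩
    rw [Finset.sum_const, nsmul_eq_mul, mul_one, h, mul_one] at hlt
    exact lt_irrefl _ hlt
  · intro w hw
    by_contra hne
    have hfw : f w = 1 := (hf w hw).resolve_right hne
    have hlt : ∑ _x ∈ s, (-1 : ℝ) < ∑ x ∈ s, f x :=
      Finset.sum_lt_sum (fun i hi => by rcases hf i hi with h1 | h1 <;> rw [h1] <;> norm_num)
        ⟨w, hw, by rw [hfw]; norm_num⟩
    rw [Finset.sum_const, nsmul_eq_mul, h] at hlt
    simp at hlt
end SignedAux2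

namespace SignedAux
variable {G : SimpleGraph V} {sg : V → V → ℤ}

lemma sigma_theta (hconn : G.Connected) (θ : V → ℤ) (hθ : ∀ x, θ x * θ x = 1)
    (hall : ∀ {a b : V} (p : G.Walk a b), walkSign sg p = θ a * θ b) (u v : V) :
    sigmaMax G sg u v = θ u * θ v ∧ sigmaMin G sg u v = θ u * θ v := by
  obtain ⟨p, hp⟩ := hconn.exists_walk_length_eq_dist u v
  have hsq : (θ u * θ v) * (θ u * θ v) = 1 := by
    rw [mul_mul_mul_comm, hθ, hθ, mul_one]
  rcases mul_self_eq_one_iff.1 hsq with h1 | h1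
  · constructor
    · unfold sigmaMax
      rw [if_pos ⟨p, hp, by rw [hall p, h1]⟩]
      exact h1.symm
    · unfold sigmaMin
      rw [if_neg ?_]
      · exact h1.symm
      rintro ⟨q, _, hq2⟩
      rw [hall q, h1] at hq2
      norm_num at hq2
  · constructor
    · unfold sigmaMax
      rw [if_neg ?_]
      · exact h1.symm
      rintro ⟨q, _, hq2⟩
      rw [hall q, h1] at hq2
      norm_num at hq2
    · unfold sigmaMin
      rw [if_pos ⟨p, hp, by rw [hall p, h1]⟩]
      exact h1.symm

lemma kSig_theta (hconn : G.Connected) (θ : V → ℤ) (hθ : ∀ x, θ x * θ x = 1)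
    (hall : ∀ {a b : V} (p : G.Walk a b), walkSign sg p = θ a * θ b) (u v : V) :
    kSigMax G sg u v = θ u * θ v := by
  unfold kSigMax
  split_ifs with h
  · have := hall (SimpleGraph.Walk.cons h SimpleGraph.Walk.nil)
    rwa [walkSign_cons, walkSign_nil, mul_one] at this
  · exact (sigma_theta hconn θ hθ hall u v).1

lemma sigmaMax_comm (hsym : ∀ u v, sg u v = sg v u) (u v : V) :
    sigmaMax G sg u v = sigmaMax G sg v u := by
  unfold sigmaMax
  have hiff : (∃ p : G.Walk u v, p.length = G.dist u v ∧ walkSign sg p = 1) ↔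
      (∃ p : G.Walk v u, p.length = G.dist v u ∧ walkSign sg p = 1) := by
    constructor
    · rintro ⟨p, h1, h2⟩
      exact ⟨p.reverse,
        by rw [SimpleGraph.Walk.length_reverse, h1, SimpleGraph.dist_comm],
        by rw [walkSign_reverse hsym, h2]⟩
    · rintro ⟨p, h1, h2⟩
      exact ⟨p.reverse,
        by rw [SimpleGraph.Walk.length_reverse, h1, SimpleGraph.dist_comm],
        by rw [walkSign_reverse hsym, h2]⟩
  classical
  rw [if_congr hiff rfl rfl]

lemma kSigMax_comm (hsym : ∀ u v, sg u v = sg v u) (u v : V) :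
    kSigMax G sg u v = kSigMax G sg v u := by
  unfold kSigMax
  by_cases h : G.Adj u v
  · rw [if_pos h, if_pos h.symm, hsym]
  · rw [if_neg h, if_neg (fun h' => h h'.symm), sigmaMax_comm hsym]

lemma kSigMax_pm (hval : ∀ u v, G.Adj u v → sg u v = 1 ∨ sg u v = -1) (u v : V) :
    kSigMax G sg u v = 1 ∨ kSigMax G sg u v = -1 := by
  unfold kSigMax
  split_ifs with h
  · exact hval u v h
  · unfold sigmaMax
    split_ifs <;> simp

end SignedAux

theorem balanced_iff_spectrum {V : Type*} [Fintype V] (G : SimpleGraph V) (sg : V → V → ℤ)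
    (hconn : G.Connected) (hsym : ∀ u v, sg u v = sg v u)
    (hval : ∀ u v, G.Adj u v → sg u v = 1 ∨ sg u v = -1) [DecidableEq V] :
    SBalanced G sg ↔
      ((∀ u v : V, sigmaMax G sg u v = sigmaMin G sg u v) ∧
        ((Matrix.of fun u v : V => if u = v then (0 : ℝ) else (kSigMax G sg u v : ℝ)).charpoly =
      (X - C ((Fintype.card V : ℝ) - 1)) * (X + C 1) ^ (Fintype.card V - 1))) := by
  classical
  constructor
  · -- forward direction
    intro hb
    obtain ⟨θ, hθ, hall⟩ := SignedAux.exists_theta hb hconn hsym hval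
    have hNE : Nonempty V := hconn.nonempty
    constructor
    · intro u v
      rw [(SignedAux.sigma_theta hconn θ hθ hall u v).1,
        (SignedAux.sigma_theta hconn θ hθ hall u v).2]
    · have hMeq : (Matrix.of fun u v : V => if u = v then (0 : ℝ) else (kSigMax G sg u v : ℝ))
          = Matrix.vecMulVec (fun v : V => ((θ v : ℤ) : ℝ)) (fun v : V => ((θ v : ℤ) : ℝ))
            - 1 := by
        ext u v
        by_cases huv : u = v
        · subst huv
          simp only [Matrix.of_apply, eq_self_iff_true, if_true, Matrix.sub_apply,
            Matrix.vecMulVec_apply, Matrix.one_apply_eq]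
          have h1 : ((θ u : ℤ) : ℝ) * ((θ u : ℤ) : ℝ) = 1 := by exact_mod_cast hθ u
          linarith
        · simp only [Matrix.of_apply, if_neg huv, Matrix.sub_apply, Matrix.vecMulVec_apply,
            Matrix.one_apply_ne huv, sub_zero]
          have h1 := SignedAux.kSig_theta hconn θ hθ hall u v
          exact_mod_cast congrArg (fun z : ℤ => (z : ℝ)) h1
      rw [hMeq]
      exact SignedAux2.charpoly_aux _ (fun i => by exact_mod_cast hθ i)
  · -- backward direction
    rintro ⟨-, hchar⟩
    intro u₀ p hp
    -- a cycle forces at least 3 vertices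
    have hm : 3 ≤ Fintype.card V := by
      have h3 : 3 ≤ p.length := hp.three_le_length
      have hnd : p.support.tail.Nodup := hp.2
      have hlen : p.support.tail.length = p.length := by
        have := SimpleGraph.Walk.length_support p
        simp [List.length_tail, this]
      have := List.Nodup.length_le_card hnd
      omega
    set m := Fintype.card V with hmdef
    set M : Matrix V V ℝ :=
      (Matrix.of fun u v : V => if u = v then (0 : ℝ) else (kSigMax G sg u v : ℝ)) with hMdef
    have hMsym : Matrix.transpose M = M := by
      ext i j
      rw [Matrix.transpose_apply]
      show (if j = i then (0:ℝ) else (kSigMax G sg j i : ℝ))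
        = (if i = j then (0:ℝ) else (kSigMax G sg i j : ℝ))
      by_cases hij : i = j
      · subst hij; simp
      · rw [if_neg hij, if_neg (fun h => hij h.symm), SignedAux.kSigMax_comm hsym]
    set c : ℝ := (m : ℝ) - 1 with hcdef
    have hCH := Matrix.aeval_self_charpoly M
    rw [hchar] at hCH
    simp only [map_mul, map_pow, map_sub, map_add, Polynomial.aeval_X, Polynomial.aeval_C,
      Algebra.algebraMap_eq_smul_one, one_smul] at hCH
    -- hCH : (M - c • 1) * (M + 1) ^ (m - 1) = 0
    have hcomm : Commute (M - c • (1 : Matrix V V ℝ)) (M + 1) := by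
      have h1 : Commute M (M + 1) := (Commute.refl M).add_right (Commute.one_right M)
      have h2 : Commute (c • (1 : Matrix V V ℝ)) (M + 1) :=
        (((Commute.one_left M).smul_left c).add_right
          ((Commute.one_right (c • (1 : Matrix V V ℝ)))))
      exact h1.sub_left h2
    set B : Matrix V V ℝ := (M - c • 1) * (M + 1) with hBdef
    have hBpow : B ^ (m - 1) = 0 := by
      rw [hBdef, hcomm.mul_pow]
      have hexp : (M - c • (1 : Matrix V V ℝ)) ^ (m - 1)
          = (M - c • 1) ^ (m - 2) * (M - c • 1) := by
        rw [← pow_succ]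
        congr 1
        omega
      rw [hexp, mul_assoc, hCH, mul_zero]
    have hBT : Matrix.transpose B = B := by
      rw [hBdef, Matrix.transpose_mul, Matrix.transpose_add, Matrix.transpose_sub,
        Matrix.transpose_smul, Matrix.transpose_one, hMsym]
      exact hcomm.eq.symm
    have hB0 : B = 0 := SignedAux2.sym_pow B hBT (m - 1) (by omega) hBpow
    have hquad : M * M + M = c • M + c • (1 : Matrix V V ℝ) := by
      have hexp : (M - c • (1 : Matrix V V ℝ)) * (M + 1)
          = M * M + M - (c • M + c • (1 : Matrix V V ℝ)) := by
        rw [sub_mul, mul_add, mul_add, mul_one, mul_one, smul_mul_assoc, one_mul]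
      have hB0' : M * M + M - (c • M + c • (1 : Matrix V V ℝ)) = 0 := by
        rw [← hexp, ← hBdef]
        exact hB0
      rwa [sub_eq_zero] at hB0'
    -- triple condition
    have htriple : ∀ x y : V, x ≠ y → ∀ w : V, w ≠ x → w ≠ y →
        kSigMax G sg x w * kSigMax G sg w y = kSigMax G sg x y := by
      intro x y hxy w hwx hwy
      have hentry : ∑ w' : V, M x w' * M w' y = (c - 1) * M x y := by
        have h := congrFun (congrFun hquad x) y
        have h' : (M * M) x y + M x y = c * M x y := by
          simpa [Matrix.add_apply, Matrix.smul_apply, Matrix.one_apply_ne hxy,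
            smul_eq_mul] using h
        rw [Matrix.mul_apply] at h'
        linarith
      have hMxy : M x y = (kSigMax G sg x y : ℝ) := by
        show (if x = y then (0:ℝ) else _) = _
        rw [if_neg hxy]
      set s : Finset V := Finset.univ \ {x, y} with hsdef
      have hsplit : ∑ w' ∈ s, M x w' * M w' y = (c - 1) * M x y := by
        have hsub : ({x, y} : Finset V) ⊆ Finset.univ := Finset.subset_univ _
        have := Finset.sum_sdiff (f := fun w' => M x w' * M w' y) hsub
        rw [Finset.sum_pair hxy] at this
        have hx0 : M x x = 0 := by show (if x = x then (0:ℝ) else _) = 0; rw [if_pos rfl]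
        have hy0 : M y y = 0 := by show (if y = y then (0:ℝ) else _) = 0; rw [if_pos rfl]
        rw [hx0, hy0, zero_mul, mul_zero, add_zero, add_zero] at this
        rw [this, hentry]
      have hcards : (s.card : ℝ) = c - 1 := by
        rw [hsdef, Finset.card_sdiff_of_subset (Finset.subset_univ _), Finset.card_pair hxy,
          Finset.card_univ, ← hmdef, hcdef]
        have : (2 : ℕ) ≤ m := by omega
        push_cast [Nat.cast_sub this]
        ring
      have hpm : ∀ w' ∈ s, M x w' * M w' y = 1 ∨ M x w' * M w' y = -1 := by
        intro w' hw'
        rw [hsdef, Finset.mem_sdiff, Finset.mem_insert, Finset.mem_singleton] at hw'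
        push_neg at hw'
        have hw'x : w' ≠ x := hw'.2.1
        have hw'y : w' ≠ y := hw'.2.2
        have h1 : M x w' = (kSigMax G sg x w' : ℝ) := by
          show (if x = w' then (0:ℝ) else _) = _
          rw [if_neg (fun h => hw'x h.symm)]
        have h2 : M w' y = (kSigMax G sg w' y : ℝ) := by
          show (if w' = y then (0:ℝ) else _) = _
          rw [if_neg hw'y]
        rw [h1, h2]
        rcases SignedAux.kSigMax_pm hval x w' with ha | ha <;>
          rcases SignedAux.kSigMax_pm hval w' y with hb | hb <;>
          rw [ha, hb] <;> norm_num
      have htM : M x y = 1 ∨ M x y = -1 := by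
        rw [hMxy]
        rcases SignedAux.kSigMax_pm hval x y with ha | ha <;> rw [ha] <;> norm_num
      have hall' := SignedAux2.sum_pm_eq s (fun w' => M x w' * M w' y) hpm (M x y) htM
        (by rw [hsplit, hcards])
      have hw's : w ∈ s := by
        rw [hsdef, Finset.mem_sdiff, Finset.mem_insert, Finset.mem_singleton]
        exact ⟨Finset.mem_univ _, by push_neg; exact ⟨hwx, hwy⟩⟩
      have hfin : M x w * M w y = M x y := hall' w hw's
      have h1 : M x w = (kSigMax G sg x w : ℝ) := by
        show (if x = w then (0:ℝ) else _) = _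
        rw [if_neg (fun h => hwx h.symm)]
      have h2 : M w y = (kSigMax G sg w y : ℝ) := by
        show (if w = y then (0:ℝ) else _) = _
        rw [if_neg hwy]
      rw [h1, h2, hMxy] at hfin
      exact_mod_cast hfin
    -- build the switching function
    set θ : V → ℤ := fun x => if x = u₀ then 1 else kSigMax G sg u₀ x with hθdef
    have hθ : ∀ x, θ x * θ x = 1 := by
      intro x
      simp only [hθdef]
      by_cases hx : x = u₀
      · rw [if_pos hx]; norm_num
      · rw [if_neg hx]
        rcases SignedAux.kSigMax_pm hval u₀ x with h1 | h1 <;> rw [h1] <;> norm_num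
    have hsg : ∀ x y, G.Adj x y → sg x y = θ x * θ y := by
      intro x y hxy
      have hxyne : x ≠ y := hxy.ne
      have hks : kSigMax G sg x y = sg x y := by
        unfold kSigMax
        rw [if_pos hxy]
      simp only [hθdef]
      by_cases hx : x = u₀
      · subst hx
        rw [if_pos rfl, one_mul, if_neg (fun h => hxyne h.symm), hks]
      · by_cases hy : y = u₀
        · subst hy
          rw [if_pos rfl, mul_one, if_neg hx, SignedAux.kSigMax_comm hsym, hks]
        · rw [if_neg hx, if_neg hy, ← hks]
          have := htriple x y hxyne u₀ (fun h => hx h.symm) (fun h => hy h.symm)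
          rw [← this, SignedAux.kSigMax_comm hsym x u₀]
    exact (SignedAux.walkSign_theta θ hθ hsg p).trans (hθ u₀)
end
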